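/- Let p be prime, k ≥ 1, and f : (ZMod p)^n → ℝ/ℤ a nonclassical polynomial of degree d whose values on {0,1}^n lie in (1/p^k)ℤ/ℤ. Let φ : (1/p^k)ℤ/ℤ → ZMod p be any function. Then there exists a classical polynomial g ∈ (ZMod p)[x₁,…,x_n] of total degree at most (p^k − 1)·d such that g(x) = φ(f(x)) for all x ∈ {0,1}^n. -/

import Mathlib

open Finset

/-- Additive directional derivative `D_h f(x) = f(x+h) - f(x)`. -/
noncomputable def D {V M : Type*} [Add V] [AddCommGroup M] (h : V) (f : V → M) : V → M :=
  fun x => f (x + h) - f x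

/-- `f` is a nonclassical polynomial of degree at most `d`:
all `(d+1)`-fold iterated derivatives vanish identically. -/
def IsNCPoly {V M : Type*} [Add V] [AddCommGroup M] (d : ℕ) (f : V → M) : Prop :=
  ∀ hs : List V, hs.length = d + 1 → hs.foldr D f = 0

/-- `e(t) = exp(2πit)` on the torus `ℝ/ℤ`. -/
noncomputable def e : AddCircle (1 : ℝ) → ℂ :=
  Function.Periodic.lift (f := fun t : ℝ => Complex.exp (2 * (Real.pi : ℂ) * Complex.I * (t : ℂ)))
    (by
      intro t
      dsimp only
      rw [Complex.ofReal_add, Complex.ofReal_one, mul_add, mul_one, Complex.exp_add,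
        Complex.exp_two_pi_mul_I, mul_one])

/-- `x` is a Boolean point: all coordinates are `0` or `1`. -/
def IsBool {n : ℕ} {R : Type*} [Zero R] [One R] (x : Fin n → R) : Prop :=
  ∀ i, x i = 0 ∨ x i = 1

/-- A nonclassical polynomial of degree `d` whose values on the hypercube lie
in `(1/p^k)ℤ/ℤ` can be converted, after applying any map `φ` to its values,
to a classical polynomial of degree at most `(p^k - 1)d` on `{0,1}^n`. -/

lemma addcircle_intCast_eq_zero (z : ℤ) : (((z : ℝ)) : AddCircle (1 : ℝ)) = 0 := by
  rw [AddCircle.coe_eq_zero_iff]; exact ⟨z, by simp⟩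

lemma D_zero {V M : Type*} [Add V] [AddCommGroup M] (h : V) : D h (0 : V → M) = 0 := by
  funext x; simp [D]

lemma IsNCPoly.foldr_eq_zero {V M : Type*} [Add V] [AddCommGroup M] {d : ℕ} {f : V → M}
    (hf : IsNCPoly d f) : ∀ L : List V, d + 1 ≤ L.length → L.foldr D f = 0 := by
  intro L
  induction L with
  | nil => intro h; simp at h
  | cons a L ih =>
    intro h
    by_cases hL : d + 1 ≤ L.length
    · simp only [List.foldr_cons, ih hL, D_zero]
    · have : L.length = d := by simp at h ⊢; omega
      exact hf (a :: L) (by simp [this])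

lemma diff_formula {α V M : Type*} [DecidableEq α] [AddCommGroup V] [AddCommGroup M]
    (E : α → V) (f : V → M) :
    ∀ (l : List α), l.Nodup → ∀ y : V,
      ((l.map E).foldr D f) y
        = ∑ T ∈ l.toFinset.powerset,
            ((-1 : ℤ) ^ (l.length - T.card)) • f (y + ∑ i ∈ T, E i) := by
  intro l
  induction l with
  | nil => intro _ y; simp
  | cons a l ih =>
    intro hnd y
    have ha : a ∉ l.toFinset := by
      simp [List.nodup_cons.mp hnd |>.1]
    have hnd' := (List.nodup_cons.mp hnd).2
    have key : ∀ T ∈ l.toFinset.powerset, T.card ≤ l.length := by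
      intro T hT
      exact le_trans (card_le_card (mem_powerset.mp hT)) l.toFinset_card_le
    simp only [List.map_cons, List.foldr_cons]
    show ((l.map E).foldr D f) (y + E a) - ((l.map E).foldr D f) y = _
    rw [ih hnd' (y + E a), ih hnd' y, List.toFinset_cons,
      Finset.sum_powerset_insert ha]
    have h1 : ∀ T ∈ l.toFinset.powerset,
        ((-1 : ℤ) ^ ((a :: l).length - T.card)) • f (y + ∑ i ∈ T, E i)
          = -(((-1 : ℤ) ^ (l.length - T.card)) • f (y + ∑ i ∈ T, E i)) := by
      intro T hT
      have hc := key T hT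
      have hl : (a :: l).length - T.card = (l.length - T.card) + 1 := by
        simp only [List.length_cons]; omega
      rw [hl, pow_succ, mul_comm, neg_one_mul, neg_smul]
    have h2 : ∀ T ∈ l.toFinset.powerset,
        ((-1 : ℤ) ^ ((a :: l).length - (insert a T).card)) • f (y + ∑ i ∈ insert a T, E i)
          = ((-1 : ℤ) ^ (l.length - T.card)) • f (y + E a + ∑ i ∈ T, E i) := by
      intro T hT
      have haT : a ∉ T := fun h => ha (mem_powerset.mp hT h)
      have hc := key T hT
      rw [Finset.card_insert_of_notMem haT, Finset.sum_insert haT, ← add_assoc]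
      congr 2
      simp only [List.length_cons]
      omega
    rw [Finset.sum_congr rfl h1, Finset.sum_congr rfl h2, Finset.sum_neg_distrib]
    abel


lemma choose_add_pow_mod (p : ℕ) [hp : Fact p.Prime] (k : ℕ) :
    ∀ (t r j : ℕ), j < p ^ k → (((p ^ k * t + r).choose j : ZMod p)) = (r.choose j : ZMod p) := by
  intro t
  induction t with
  | zero => intro r j _; simp
  | succ t ih =>
    intro r j hj
    have : p ^ k * (t + 1) + r = p ^ k + (p ^ k * t + r) := by ring
    rw [this, Nat.add_choose_eq]
    push_cast
    rw [Finset.sum_eq_single ((0 : ℕ), j)]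
    · simp [ih r j hj]
    · rintro ⟨i1, i2⟩ hmem hne
      rw [Finset.HasAntidiagonal.mem_antidiagonal] at hmem
      have hi1 : i1 ≠ 0 := by
        rintro rfl
        exact hne (by simp at hmem; simp [hmem])
      have hdvd : p ∣ (p ^ k).choose i1 :=
        hp.out.dvd_choose_pow hi1 (by omega)
      have : ((p ^ k).choose i1 : ZMod p) = 0 :=
        (ZMod.natCast_eq_zero_iff _ _).mpr hdvd
      rw [this, zero_mul]
    · intro h
      exact absurd (Finset.HasAntidiagonal.mem_antidiagonal.mpr (by simp)) h

lemma choose_congr_mod (p : ℕ) [hp : Fact p.Prime] (k : ℕ) {a b j : ℕ}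
    (hab : a % p ^ k = b % p ^ k) (hj : j < p ^ k) :
    ((a.choose j : ZMod p)) = (b.choose j : ZMod p) := by
  have ha : p ^ k * (a / p ^ k) + a % p ^ k = a := Nat.div_add_mod a (p ^ k)
  have hb : p ^ k * (b / p ^ k) + b % p ^ k = b := Nat.div_add_mod b (p ^ k)
  rw [← ha, ← hb, choose_add_pow_mod p k _ _ _ hj, choose_add_pow_mod p k _ _ _ hj, hab]

noncomputable def lam (p : ℕ) (φt : ℕ → ZMod p) : ℕ → ZMod p
  | j => φt j - ∑ i ∈ (Finset.range j).attach, lam p φt i.1 * ((j.choose i.1 : ℕ) : ZMod p)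
  termination_by j => j
  decreasing_by exact Finset.mem_range.mp i.2

lemma lam_spec (p : ℕ) (φt : ℕ → ZMod p) (u N : ℕ) (hu : u < N) :
    ∑ j ∈ Finset.range N, lam p φt j * ((u.choose j : ℕ) : ZMod p) = φt u := by
  have hsub : Finset.range (u + 1) ⊆ Finset.range N := by
    intro x hx; rw [Finset.mem_range] at *; omega
  rw [← Finset.sum_subset hsub (by
    intro j _ hj
    rw [Finset.mem_range, not_lt] at hj
    rw [Nat.choose_eq_zero_of_lt (by omega)]
    simp)]
  rw [Finset.sum_range_succ, Nat.choose_self]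
  rw [show lam p φt u = φt u - ∑ i ∈ (Finset.range u).attach, lam p φt i.1 * ((u.choose i.1 : ℕ) : ZMod p) from by rw [lam]]
  rw [Finset.sum_attach (Finset.range u) (fun i => lam p φt i * ((u.choose i : ℕ) : ZMod p))]
  push_cast
  ring

def bnat {n : ℕ} {R : Type*} [One R] [DecidableEq R] (x : Fin n → R) (i : Fin n) : ℕ :=
  if x i = 1 then 1 else 0

lemma prod_bnat_zero_or_one {n : ℕ} {R : Type*} [One R] [DecidableEq R]
    (x : Fin n → R) (S : Finset (Fin n)) :
    (∏ i ∈ S, bnat x i) = 0 ∨ (∏ i ∈ S, bnat x i) = 1 := by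
  have h1 : (∏ i ∈ S, bnat x i) ≤ 1 := by
    apply Finset.prod_le_one
    · intro i _; exact Nat.zero_le _
    · intro i _; unfold bnat; split <;> omega
  omega

lemma cast_prod_bnat {n p : ℕ} [hp : Fact p.Prime] (x : Fin n → ZMod p) (hx : IsBool x) (S : Finset (Fin n)) :
    (((∏ i ∈ S, bnat x i : ℕ)) : ZMod p) = ∏ i ∈ S, x i := by
  haveI : Fact (1 < p) := ⟨hp.out.one_lt⟩
  push_cast
  refine Finset.prod_congr rfl fun i _ => ?_
  unfold bnat
  rcases hx i with h | h <;> simp [h, one_ne_zero]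

lemma polyB (p d : ℕ) [hp : Fact p.Prime] {n : ℕ} (a : Finset (Fin n) → ℕ) :
    ∀ 𝒮 : Finset (Finset (Fin n)), (∀ S ∈ 𝒮, S.card ≤ d) →
    ∃ G : ℕ → MvPolynomial (Fin n) (ZMod p),
      ∀ j, (G j).totalDegree ≤ j * d ∧
        ∀ x : Fin n → ZMod p, IsBool x →
          MvPolynomial.eval x (G j)
            = (((∑ S ∈ 𝒮, a S * ∏ i ∈ S, bnat x i).choose j : ℕ) : ZMod p) := by
  intro 𝒮
  induction 𝒮 using Finset.induction_on with
  | empty =>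
    intro _
    refine ⟨fun j => if j = 0 then 1 else 0, fun j => ⟨?_, ?_⟩⟩
    · cases j <;> simp
    · intro x hx
      cases j with
      | zero => simp
      | succ j => simp
  | @insert S₀ 𝒮' hS₀ ih =>
    intro hS
    obtain ⟨G', hG'⟩ := ih (fun S hS' => hS S (Finset.mem_insert_of_mem hS'))
    have hcard : S₀.card ≤ d := hS S₀ (Finset.mem_insert_self _ _)
    set XS : MvPolynomial (Fin n) (ZMod p) := ∏ i ∈ S₀, MvPolynomial.X i with hXS
    set A : ℕ → MvPolynomial (Fin n) (ZMod p) := fun i1 =>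
      if i1 = 0 then 1 else MvPolynomial.C (((a S₀).choose i1 : ℕ) : ZMod p) * XS with hA
    refine ⟨fun j => ∑ ij ∈ Finset.HasAntidiagonal.antidiagonal j, A ij.1 * G' ij.2, fun j => ⟨?_, ?_⟩⟩
    · apply MvPolynomial.totalDegree_finsetSum_le
      intro ij hij
      rw [Finset.HasAntidiagonal.mem_antidiagonal] at hij
      haveI : Fact (1 < p) := ⟨hp.out.one_lt⟩
      have hdXS : XS.totalDegree ≤ S₀.card := by
        refine le_trans (MvPolynomial.totalDegree_finset_prod _ _) ?_
        refine le_trans (Finset.sum_le_sum fun i _ => le_of_eq (MvPolynomial.totalDegree_X i)) ?_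
        simp
      have hdA : (A ij.1).totalDegree ≤ ij.1 * d := by
        by_cases h0 : ij.1 = 0
        · simp [hA, h0]
        · simp only [hA, if_neg h0]
          refine le_trans (MvPolynomial.totalDegree_mul _ _) ?_
          rw [MvPolynomial.totalDegree_C, zero_add]
          calc XS.totalDegree ≤ S₀.card := hdXS
            _ ≤ d := hcard
            _ ≤ ij.1 * d := Nat.le_mul_of_pos_left d (Nat.pos_of_ne_zero h0)
      refine le_trans (MvPolynomial.totalDegree_mul _ _) ?_
      calc (A ij.1).totalDegree + (G' ij.2).totalDegree
          ≤ ij.1 * d + ij.2 * d := Nat.add_le_add hdA (hG' ij.2).1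
        _ = j * d := by rw [← Nat.add_mul, hij]
    · intro x hx
      have hevalXS : MvPolynomial.eval x XS = ((∏ i ∈ S₀, bnat x i : ℕ) : ZMod p) := by
        rw [hXS, map_prod, cast_prod_bnat x hx]
        exact Finset.prod_congr rfl fun i _ => by rw [MvPolynomial.eval_X]
      rw [Finset.sum_insert hS₀, map_sum]
      rcases prod_bnat_zero_or_one x S₀ with hχ | hχ
      · rw [hχ, Nat.mul_zero, Nat.zero_add]
        rw [Finset.sum_eq_single ((0 : ℕ), j)]
        · simp only [map_mul, hA, if_pos rfl, map_one, one_mul]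
          exact (hG' j).2 x hx
        · rintro ⟨i1, i2⟩ hmem hne
          rw [Finset.HasAntidiagonal.mem_antidiagonal] at hmem
          have hi1 : i1 ≠ 0 := by
            rintro rfl
            have : i2 = j := by simpa using hmem
            exact hne (by rw [this])
          simp only [hA, if_neg hi1, map_mul, MvPolynomial.eval_C, hevalXS, hχ]
          push_cast
          ring
        · intro h
          exact absurd (Finset.HasAntidiagonal.mem_antidiagonal.mpr (by simp)) h
      · rw [hχ, Nat.mul_one, Nat.add_choose_eq]
        push_cast
        refine Finset.sum_congr rfl fun ij hij => ?_
        rw [map_mul, (hG' ij.2).2 x hx]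
        congr 1
        by_cases h0 : ij.1 = 0
        · simp [hA, h0]
        · simp [hA, if_neg h0, hevalXS, hχ]

lemma moebius_inv {α : Type*} [DecidableEq α] (g : Finset α → ℤ) (U : Finset α) :
    g U = ∑ S ∈ U.powerset, ∑ T ∈ S.powerset, (-1 : ℤ) ^ (S.card - T.card) * g T := by
  rw [Finset.sum_comm' (t' := U.powerset)
    (s' := fun T => U.powerset.filter (fun S => T ⊆ S))
    (by
      intro S T
      simp only [Finset.mem_powerset, Finset.mem_filter]
      constructor
      · rintro ⟨h1, h2⟩; exact ⟨⟨h1, h2⟩, h2.trans h1⟩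
      · rintro ⟨⟨h1, h2⟩, _⟩; exact ⟨h1, h2⟩)]
  have inner : ∀ T ∈ U.powerset,
      ∑ S ∈ U.powerset.filter (fun S => T ⊆ S), (-1 : ℤ) ^ (S.card - T.card) * g T
        = (if T = U then 1 else 0) * g T := by
    intro T hT
    rw [Finset.mem_powerset] at hT
    rw [← Finset.sum_mul]
    congr 1
    have : ∑ S ∈ U.powerset.filter (fun S => T ⊆ S), (-1 : ℤ) ^ (S.card - T.card)
        = ∑ R ∈ (U \ T).powerset, (-1 : ℤ) ^ R.card := by
      refine Finset.sum_nbij' (fun S => S \ T) (fun R => R ∪ T) ?_ ?_ ?_ ?_ ?_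
      · intro S hS
        simp only [Finset.mem_filter, Finset.mem_powerset] at hS ⊢
        exact Finset.sdiff_subset_sdiff hS.1 Finset.Subset.rfl
      · intro R hR
        simp only [Finset.mem_powerset] at hR
        simp only [Finset.mem_filter, Finset.mem_powerset]
        constructor
        · exact Finset.union_subset (hR.trans Finset.sdiff_subset) hT
        · exact Finset.subset_union_right
      · intro S hS
        simp only [Finset.mem_filter, Finset.mem_powerset] at hS
        exact Finset.sdiff_union_of_subset hS.2
      · intro R hR
        simp only [Finset.mem_powerset] at hR
        have hd : Disjoint R T := Finset.disjoint_of_subset_left hR Finset.sdiff_disjoint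
        show (R ∪ T) \ T = R
        rw [Finset.union_sdiff_distrib, Finset.sdiff_self, Finset.union_empty,
          Finset.sdiff_eq_self_iff_disjoint.mpr hd]
      · intro S hS
        simp only [Finset.mem_filter, Finset.mem_powerset] at hS
        rw [Finset.card_sdiff_of_subset hS.2]
    rw [this, Finset.sum_powerset_neg_one_pow_card]
    by_cases h : T = U
    · subst h; simp
    · rw [if_neg h, if_neg (fun he => h (Finset.Subset.antisymm hT
        (Finset.sdiff_eq_empty_iff_subset.mp he)))]
  rw [Finset.sum_congr rfl inner, Finset.sum_eq_single U]
  · simp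
  · intro T _ hne; simp [hne]
  · intro h; exact absurd (Finset.mem_powerset.mpr Finset.Subset.rfl) h

lemma addcircle_coe_sum {ι : Type*} (s : Finset ι) (f : ι → ℝ) :
    ((∑ i ∈ s, f i : ℝ) : AddCircle (1 : ℝ)) = ∑ i ∈ s, ((f i : ℝ) : AddCircle (1 : ℝ)) := by
  induction s using Finset.cons_induction with
  | empty => simp
  | cons a s ha ih => rw [Finset.sum_cons, Finset.sum_cons, AddCircle.coe_add, ih]

theorem stmt8 (p n d k : ℕ) [Fact p.Prime] (hk : 1 ≤ k)
    (f : (Fin n → ZMod p) → AddCircle (1 : ℝ))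
    (hdeg : IsNCPoly d f)
    (hval : ∀ x : Fin n → ZMod p, IsBool x →
      ∃ m : ℤ, f x = (((m : ℝ) / (p ^ k : ℝ)) : AddCircle (1 : ℝ)))
    (φ : AddCircle (1 : ℝ) → ZMod p) :
    ∃ g : MvPolynomial (Fin n) (ZMod p),
      g.totalDegree ≤ (p ^ k - 1) * d ∧
      ∀ x : Fin n → ZMod p, IsBool x → MvPolynomial.eval x g = φ (f x) := by
  classical
  have hp := (Fact.out : p.Prime)
  set N := p ^ k with hNdef
  have hN0 : 0 < N := pow_pos hp.pos k
  have hNR : (N : ℝ) ≠ 0 := by positivity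
  -- normalized values on the cube
  have hex : ∀ x : Fin n → ZMod p, IsBool x →
      ∃ a : ℕ, a < N ∧ f x = (((a : ℝ) / (N : ℝ)) : AddCircle (1 : ℝ)) := by
    intro x hx
    obtain ⟨m0, hm0⟩ := hval x hx
    have hNZ : (0 : ℤ) < (N : ℤ) := by exact_mod_cast hN0
    refine ⟨(m0 % (N : ℤ)).toNat, ?_, ?_⟩
    · have h1 : m0 % (N : ℤ) < (N : ℤ) := Int.emod_lt_of_pos _ hNZ
      omega
    · have h1 : (0 : ℤ) ≤ m0 % (N : ℤ) := Int.emod_nonneg _ (by omega)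
      have h2 : (((m0 % (N : ℤ)).toNat : ℕ) : ℝ) = ((m0 % (N : ℤ) : ℤ) : ℝ) := by
        rw [← Int.cast_natCast, Int.toNat_of_nonneg h1]
      have hcast : ((p : ℝ)) ^ k = (N : ℝ) := by rw [hNdef]; push_cast; ring
      rw [hm0]
      have key : (m0 : ℝ) / ((p : ℝ)) ^ k
          = (((m0 % (N : ℤ)).toNat : ℕ) : ℝ) / (N : ℝ) + (((m0 / (N : ℤ) : ℤ) : ℤ) : ℝ) := by
        rw [hcast]
        have h3 : ((m0 % (N:ℤ) + (N:ℤ) * (m0 / (N:ℤ)) : ℤ) : ℝ) = (m0 : ℝ) := by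
          rw [Int.emod_add_mul_ediv m0 (N : ℤ)]
        push_cast at h3
        field_simp
        linarith
      rw [key, AddCircle.coe_add, addcircle_intCast_eq_zero, add_zero]
  choose mfun hmlt hmval using hex
  -- indicator vectors
  set E : Fin n → (Fin n → ZMod p) := fun i j => if j = i then 1 else 0 with hE
  set χ : Finset (Fin n) → (Fin n → ZMod p) := fun T j => if j ∈ T then 1 else 0 with hχ
  have hχsum : ∀ T : Finset (Fin n), χ T = ∑ i ∈ T, E i := by
    intro T; funext j
    simp only [hχ, hE, Finset.sum_apply]
    rw [Finset.sum_ite_eq T j (fun _ => (1 : ZMod p))]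
  have hχB : ∀ T, IsBool (χ T) := by
    intro T i; rw [hχ]; by_cases h : i ∈ T <;> simp [h]
  set m' : Finset (Fin n) → ℕ := fun T => mfun (χ T) (hχB T) with hm'
  -- vanishing of high-order differences over subcubes
  have hvanish : ∀ S : Finset (Fin n), d + 1 ≤ S.card →
      ∑ T ∈ S.powerset, ((-1 : ℤ) ^ (S.card - T.card)) • f (χ T) = 0 := by
    intro S hS
    have hzero : ((S.toList.map E).foldr D f) = 0 := by
      apply hdeg.foldr_eq_zero
      rw [List.length_map, Finset.length_toList]; exact hS
    have hdf := diff_formula E f S.toList (Finset.nodup_toList S) 0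
    rw [hzero, Finset.toList_toFinset, Finset.length_toList] at hdf
    have h0 : ∀ T ∈ S.powerset, ((-1 : ℤ) ^ (S.card - T.card)) • f (χ T)
        = ((-1 : ℤ) ^ (S.card - T.card)) • f ((0 : Fin n → ZMod p) + ∑ i ∈ T, E i) := by
      intro T _; rw [hχsum T, zero_add]
    rw [Finset.sum_congr rfl h0, ← hdf]
    simp
  -- Möbius coefficients
  set cS : Finset (Fin n) → ℤ :=
    fun S => ∑ T ∈ S.powerset, (-1 : ℤ) ^ (S.card - T.card) * (m' T : ℤ) with hcS
  have hdvd : ∀ S : Finset (Fin n), d + 1 ≤ S.card → (N : ℤ) ∣ cS S := by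
    intro S hS
    have hv := hvanish S hS
    have hstep : ∀ T ∈ S.powerset, ((-1 : ℤ) ^ (S.card - T.card)) • f (χ T)
        = (((((-1 : ℤ) ^ (S.card - T.card) * (m' T : ℤ) : ℤ) : ℝ) / (N : ℝ)) :
            AddCircle (1 : ℝ)) := by
      intro T _
      rw [hmval (χ T) (hχB T), ← AddCircle.coe_zsmul]
      congr 1
      rw [zsmul_eq_mul]
      push_cast
      ring
    rw [Finset.sum_congr rfl hstep] at hv
    have hsum : ∑ T ∈ S.powerset,
        (((((-1 : ℤ) ^ (S.card - T.card) * (m' T : ℤ) : ℤ) : ℝ) / (N : ℝ)) : AddCircle (1 : ℝ))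
          = (((cS S : ℝ) / (N : ℝ)) : AddCircle (1 : ℝ)) := by
      rw [← addcircle_coe_sum]
      congr 1
      rw [hcS]
      push_cast
      rw [← Finset.sum_div]
    rw [hsum] at hv
    obtain ⟨z, hz⟩ := (AddCircle.coe_eq_zero_iff (1 : ℝ)).mp hv
    rw [zsmul_eq_mul, mul_one] at hz
    have : (cS S : ℝ) = (z : ℝ) * (N : ℝ) := by
      field_simp at hz
      linarith
    have hZ : cS S = z * (N : ℤ) := by exact_mod_cast this
    exact ⟨z, by linarith [hZ]⟩
  -- Möbius inversion
  have hinv : ∀ U : Finset (Fin n), (m' U : ℤ) = ∑ S ∈ U.powerset, cS S := by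
    intro U
    exact moebius_inv (fun T => (m' T : ℤ)) U
  -- the polynomial family
  set 𝒮 : Finset (Finset (Fin n)) :=
    Finset.univ.filter (fun S : Finset (Fin n) => S.card ≤ d) with h𝒮
  set a : Finset (Fin n) → ℕ := fun S => (cS S % (N : ℤ)).toNat with ha
  obtain ⟨G, hG⟩ := polyB p d (n := n) a 𝒮
    (fun S hS => (Finset.mem_filter.mp hS).2)
  set φt : ℕ → ZMod p := fun u => φ ((((u : ℝ) / (N : ℝ)) : ℝ) : AddCircle (1 : ℝ)) with hφt
  refine ⟨∑ j ∈ Finset.range N, MvPolynomial.C (lam p φt j) * G j, ?_, ?_⟩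
  · apply MvPolynomial.totalDegree_finsetSum_le
    intro j hj
    refine le_trans (MvPolynomial.totalDegree_mul _ _) ?_
    rw [MvPolynomial.totalDegree_C, zero_add]
    refine le_trans (hG j).1 ?_
    have : j ≤ N - 1 := by rw [Finset.mem_range] at hj; omega
    exact Nat.mul_le_mul_right d this
  · intro x hx
    set U : Finset (Fin n) := Finset.univ.filter (fun i => x i = 1) with hU
    haveI : Fact (1 < p) := ⟨hp.one_lt⟩
    have hxU : x = χ U := by
      funext i
      rw [hχ]
      by_cases hmem : x i = 1
      · simp [hU, hmem]
      · have h0 : x i = 0 := (hx i).resolve_right hmem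
        simp [hU, h0, hmem]
    have hbnat : ∀ T : Finset (Fin n), (∏ i ∈ T, bnat x i) = if T ⊆ U then 1 else 0 := by
      intro T
      by_cases hTU : T ⊆ U
      · rw [if_pos hTU]
        apply Finset.prod_eq_one
        intro i hi
        have : x i = 1 := (Finset.mem_filter.mp (hTU hi)).2
        simp [bnat, this]
      · rw [if_neg hTU]
        obtain ⟨i, hiT, hiU⟩ := Finset.not_subset.mp hTU
        apply Finset.prod_eq_zero hiT
        have : x i ≠ 1 := fun h => hiU (Finset.mem_filter.mpr ⟨Finset.mem_univ i, h⟩)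
        simp [bnat, this]
    set mt : ℕ := ∑ S ∈ 𝒮, a S * ∏ i ∈ S, bnat x i with hmt
    set T0 : Finset (Finset (Fin n)) := U.powerset.filter (fun S => S.card ≤ d) with hT0def
    have hT0 : 𝒮.filter (fun S => S ⊆ U) = T0 := by
      ext S
      simp only [h𝒮, hT0def, Finset.mem_filter, Finset.mem_powerset, Finset.mem_univ,
        true_and]
      tauto
    have hmtn : mt = ∑ S ∈ T0, a S := by
      have hfil : ∑ S ∈ T0, a S = ∑ S ∈ 𝒮, if S ⊆ U then a S else 0 := by
        rw [← hT0]; exact Finset.sum_filter _ _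
      rw [hmt, hfil]
      refine Finset.sum_congr rfl fun S _ => ?_
      rw [hbnat S]
      by_cases hSU : S ⊆ U <;> simp [hSU]
    have hmt2 : (mt : ℤ) = ∑ S ∈ T0, (a S : ℤ) := by
      rw [hmtn]
      push_cast
      rfl
    have haS : ∀ S, (a S : ℤ) % (N : ℤ) = cS S % (N : ℤ) := by
      intro S
      rw [ha]
      have hnn : (0 : ℤ) ≤ cS S % (N : ℤ) := Int.emod_nonneg _ (by exact_mod_cast hN0.ne')
      rw [Int.toNat_of_nonneg hnn, Int.emod_emod_of_dvd _ dvd_rfl]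
    have hrest : (N : ℤ) ∣ ∑ S ∈ U.powerset.filter (fun S => ¬ S.card ≤ d), cS S := by
      refine Finset.dvd_sum fun S hS => hdvd S ?_
      rw [Finset.mem_filter] at hS
      omega
    have hcong : (mt : ℤ) % (N : ℤ) = ((m' U : ℤ)) % (N : ℤ) := by
      obtain ⟨t, ht⟩ := hrest
      have hsplit : (m' U : ℤ) = (∑ S ∈ T0, cS S) + (N : ℤ) * t := by
        rw [hinv U, ← Finset.sum_filter_add_sum_filter_not U.powerset
          (fun S => S.card ≤ d) cS, ht, hT0def]
      rw [hsplit, Int.add_mul_emod_self_left, hmt2, Finset.sum_int_mod,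
        Finset.sum_congr rfl (fun S _ => haS S), ← Finset.sum_int_mod]
    have hnat : mt % N = m' U % N := by
      have := hcong
      rw [← Int.natCast_mod, ← Int.natCast_mod] at this
      exact_mod_cast this
    rw [map_sum]
    have hevalterm : ∀ j ∈ Finset.range N,
        MvPolynomial.eval x (MvPolynomial.C (lam p φt j) * G j)
          = lam p φt j * (((m' U).choose j : ℕ) : ZMod p) := by
      intro j hj
      rw [map_mul, MvPolynomial.eval_C, (hG j).2 x hx]
      congr 1
      exact choose_congr_mod p k hnat (Finset.mem_range.mp hj)
    rw [Finset.sum_congr rfl hevalterm, lam_spec p φt (m' U) N (hmlt _ _)]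
    rw [hφt]
    congr 1
    rw [hxU, hmval (χ U) (hχB U)]
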